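/- Let K₁, …, K_ℓ be levelwise closed and bounded matrix convex sets of g-tuples of self-adjoint complex matrices, and let K = mconv(K₁ ∪ … ∪ K_ℓ). Then for every n, every X ∈ K(n) is a matrix convex combination of elements of (K₁ ∪ … ∪ K_ℓ)(n) at level at most n; i.e., the generating points can be compressed to matrix size ≤ n. -/

import Mathlib

open Matrix

/-- A levelwise family of sets of `g`-tuples of matrices is matrix convex if it is closed
under matrix convex combinations `Σᵢ Vᵢᴴ X⁽ⁱ⁾ Vᵢ` with `Σᵢ Vᵢᴴ Vᵢ = I`. -/
def IsMatrixConvex (g : ℕ) (K : ∀ n : ℕ, Set (Fin g → Matrix (Fin n) (Fin n) ℂ)) : Prop :=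
  ∀ (n m : ℕ) (sz : Fin m → ℕ)
    (X : ∀ i : Fin m, Fin g → Matrix (Fin (sz i)) (Fin (sz i)) ℂ)
    (V : ∀ i : Fin m, Matrix (Fin (sz i)) (Fin n) ℂ),
    (∀ i, X i ∈ K (sz i)) → (∑ i, (V i)ᴴ * V i = 1) →
    (fun j => ∑ i, (V i)ᴴ * X i j * V i) ∈ K n

/-- The matrix convex hull: the smallest matrix convex levelwise family containing `S`. -/
def matrixConvexHull (g : ℕ) (S : ∀ n : ℕ, Set (Fin g → Matrix (Fin n) (Fin n) ℂ)) :
    ∀ n : ℕ, Set (Fin g → Matrix (Fin n) (Fin n) ℂ) :=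
  fun n => {X | ∀ K, IsMatrixConvex g K → (∀ m, S m ⊆ K m) → X ∈ K n}


lemma exists_isometry (p q : ℕ) (hqp : q ≤ p) (W : Submodule ℂ (EuclideanSpace ℂ (Fin p)))
    (hW : Module.finrank ℂ W ≤ q) :
    ∃ U : Matrix (Fin p) (Fin q) ℂ, Uᴴ * U = 1 ∧ ∀ x ∈ W, (U * Uᴴ).mulVec x = x := by
  classical
  set r := Module.finrank ℂ W with hr
  have hrq : r ≤ q := hW
  have hrp : r ≤ p := hrq.trans hqp
  let b₀ : OrthonormalBasis (Fin r) ℂ W := stdOrthonormalBasis ℂ W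
  let v : Fin p → EuclideanSpace ℂ (Fin p) := fun i =>
    if h : (i : ℕ) < r then (b₀ ⟨i, h⟩ : EuclideanSpace ℂ (Fin p)) else 0
  have hveq : ∀ (i : Fin p) (h : (i : ℕ) < r), v i = (b₀ ⟨i, h⟩ : EuclideanSpace ℂ (Fin p)) :=
    fun i h => dif_pos h
  have card_eq : Module.finrank ℂ (EuclideanSpace ℂ (Fin p)) = Fintype.card (Fin p) := by
    simp [finrank_euclideanSpace_fin]
  have hv : Orthonormal ℂ (({i : Fin p | (i : ℕ) < r}).restrict v) := by
    constructor
    · rintro ⟨i, hi⟩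
      have hi' : (i : ℕ) < r := hi
      change ‖v i‖ = 1
      rw [hveq i hi', ← Submodule.coe_norm]
      exact b₀.orthonormal.1 _
    · rintro ⟨i, hi⟩ ⟨j, hj⟩ hij
      have hi' : (i : ℕ) < r := hi
      have hj' : (j : ℕ) < r := hj
      have hij' : (⟨(i:ℕ), hi'⟩ : Fin r) ≠ ⟨j, hj'⟩ := by
        intro h
        have hval : (i : ℕ) = (j : ℕ) := Fin.mk_eq_mk.mp h
        exact hij (Subtype.ext (Fin.ext hval))
      change inner ℂ (v i) (v j) = 0
      simp only [hveq i hi', hveq j hj', ← Submodule.coe_inner]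
      exact b₀.orthonormal.2 hij'
  obtain ⟨b, hb⟩ := hv.exists_orthonormalBasis_extension_of_card_eq card_eq
  set U : Matrix (Fin p) (Fin q) ℂ := Matrix.of (fun i c => b (Fin.castLE hqp c) i) with hU
  have hUU : Uᴴ * U = 1 := by
    ext a c
    have := orthonormal_iff_ite.mp b.orthonormal (Fin.castLE hqp a) (Fin.castLE hqp c)
    rw [PiLp.inner_apply] at this
    simp only [RCLike.inner_apply] at this
    simp only [Matrix.mul_apply, Matrix.conjTranspose_apply, Matrix.of_apply, Matrix.one_apply,
      Complex.star_def, hU, Matrix.of_apply]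
    conv_lhs => enter [2, x]; rw [mul_comm]
    rw [this]
    simp [Fin.castLE_inj]
  refine ⟨U, hUU, ?_⟩
  intro x hx
  · have hcol : ∀ t : Fin r,
        (U * Uᴴ).mulVec ((b₀ t : W) : EuclideanSpace ℂ (Fin p))
          = ((b₀ t : W) : EuclideanSpace ℂ (Fin p)) := by
      intro t
      have htq : (t : ℕ) < q := lt_of_lt_of_le t.2 hrq
      have hbt : ((b₀ t : W) : EuclideanSpace ℂ (Fin p))
          = U.mulVec (Pi.single (⟨t, htq⟩ : Fin q) 1) := by
        funext i
        rw [Matrix.mulVec_single_one]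
        show _ = b (Fin.castLE hqp ⟨t, htq⟩) i
        have htp : (t : ℕ) < p := lt_of_lt_of_le t.2 hrp
        have : Fin.castLE hqp (⟨t, htq⟩ : Fin q) = (⟨t, htp⟩ : Fin p) := rfl
        rw [this, hb _ (show ((⟨t, htp⟩ : Fin p) : ℕ) < r from t.2), hveq _ t.2]
      rw [hbt, Matrix.mulVec_mulVec, Matrix.mul_assoc, hUU, Matrix.mul_one]
    have hx2 : (x : Fin p → ℂ)
        = ∑ t : Fin r, (b₀.repr ⟨x, hx⟩ t) • ((b₀ t : W) : EuclideanSpace ℂ (Fin p)) := by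
      have h := congrArg (Subtype.val) (b₀.sum_repr ⟨x, hx⟩).symm
      exact congrArg WithLp.ofLp (by simpa using h)
    rw [hx2, ← Matrix.mulVecLin_apply, WithLp.ofLp_sum, map_sum]
    refine Finset.sum_congr rfl fun t _ => ?_
    rw [WithLp.ofLp_smul, LinearMap.map_smul, Matrix.mulVecLin_apply, hcol t]

lemma exists_compression (p n' : ℕ) (A : Matrix (Fin p) (Fin n') ℂ) :
    ∃ (q : ℕ) (_ : q ≤ n') (U : Matrix (Fin p) (Fin q) ℂ),
      Uᴴ * U = 1 ∧ U * Uᴴ * A = A := by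
  classical
  set W : Submodule ℂ (EuclideanSpace ℂ (Fin p)) := LinearMap.range (Matrix.toEuclideanLin A)
    with hWdef
  have h1 : Module.finrank ℂ W ≤ n' := by
    have := LinearMap.finrank_range_le (Matrix.toEuclideanLin A)
    simpa [finrank_euclideanSpace_fin] using this
  have h2 : Module.finrank ℂ W ≤ p := by
    have := Submodule.finrank_le W
    simpa [finrank_euclideanSpace_fin] using this
  obtain ⟨U, hUU, hfix⟩ := exists_isometry p (min p n') (min_le_left _ _) W
    (le_min h2 h1)
  refine ⟨min p n', min_le_right _ _, U, hUU, ?_⟩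
  have hcolmem : ∀ j : Fin n', WithLp.toLp 2 (A *ᵥ Pi.single j 1) ∈ W := by
    intro j
    exact ⟨WithLp.toLp 2 (Pi.single j 1), by
      rw [Matrix.toEuclideanLin_apply_piLp_toLp]⟩
  ext i j
  have h := congrFun (hfix _ (hcolmem j)) i
  simp only [WithLp.ofLp_toLp, Matrix.mulVec_single_one] at h
  simpa [Matrix.mul_apply, Matrix.mulVec, dotProduct, Matrix.transpose_apply] using h

section Aux
variable {g ℓ : ℕ} (K : Fin ℓ → ∀ n : ℕ, Set (Fin g → Matrix (Fin n) (Fin n) ℂ))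

def goodSet (n : ℕ) : Set (Fin g → Matrix (Fin n) (Fin n) ℂ) :=
  {X | ∃ (m : ℕ) (sz : Fin m → ℕ)
      (X' : ∀ i : Fin m, Fin g → Matrix (Fin (sz i)) (Fin (sz i)) ℂ)
      (V : ∀ i : Fin m, Matrix (Fin (sz i)) (Fin n) ℂ),
      (∀ i, sz i ≤ n) ∧ (∀ i, ∃ k, X' i ∈ K k (sz i)) ∧
      (∑ i, (V i)ᴴ * V i = 1) ∧
      X = fun j => ∑ i, (V i)ᴴ * X' i j * V i}

lemma mem_goodSet_of_fintype (n : ℕ) (X : Fin g → Matrix (Fin n) (Fin n) ℂ)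
    (ι : Type) [Fintype ι] (sz : ι → ℕ)
    (X' : ∀ i : ι, Fin g → Matrix (Fin (sz i)) (Fin (sz i)) ℂ)
    (V : ∀ i : ι, Matrix (Fin (sz i)) (Fin n) ℂ)
    (h1 : ∀ i, sz i ≤ n) (h2 : ∀ i, ∃ k, X' i ∈ K k (sz i))
    (h3 : ∑ i, (V i)ᴴ * V i = 1)
    (h4 : X = fun j => ∑ i, (V i)ᴴ * X' i j * V i) :
    X ∈ goodSet K n := by
  classical
  let e := Fintype.equivFin ι
  refine ⟨Fintype.card ι, fun t => sz (e.symm t), fun t => X' (e.symm t),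
    fun t => V (e.symm t), fun t => h1 _, fun t => h2 _, ?_, ?_⟩
  · rw [Equiv.sum_comp e.symm (fun i => (V i)ᴴ * V i)]; exact h3
  · funext j
    rw [Equiv.sum_comp e.symm (fun i => (V i)ᴴ * X' i j * V i)]
    exact congrFun h4 j
end Aux

section MulAux
variable {p n q s : ℕ} (A : Matrix (Fin p) (Fin n) ℂ) (U : Matrix (Fin p) (Fin q) ℂ)

lemma fix_conj (h : U * Uᴴ * A = A) : Aᴴ * (U * Uᴴ) = Aᴴ := by
  have h2 : (U * Uᴴ)ᴴ = U * Uᴴ := by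
    rw [conjTranspose_mul, conjTranspose_conjTranspose]
  calc Aᴴ * (U * Uᴴ) = Aᴴ * (U * Uᴴ)ᴴ := by rw [h2]
    _ = (U * Uᴴ * A)ᴴ := (conjTranspose_mul (U * Uᴴ) A).symm
    _ = Aᴴ := by rw [h]

lemma proj_absorb (h : U * Uᴴ * A = A) (B : Matrix (Fin p) (Fin s) ℂ) :
    Aᴴ * (U * (Uᴴ * B)) = Aᴴ * B := by
  calc Aᴴ * (U * (Uᴴ * B)) = (Aᴴ * (U * Uᴴ)) * B := by simp only [Matrix.mul_assoc]
    _ = Aᴴ * B := by rw [fix_conj A U h]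

lemma compress_sq (h : U * Uᴴ * A = A) :
    (Uᴴ * A)ᴴ * (Uᴴ * A) = Aᴴ * A := by
  simp only [conjTranspose_mul, conjTranspose_conjTranspose, Matrix.mul_assoc]
  rw [show U * (Uᴴ * A) = A from by rw [← Matrix.mul_assoc, h]]

lemma compress_val (h : U * Uᴴ * A = A) (Z : Matrix (Fin p) (Fin p) ℂ) :
    (Uᴴ * A)ᴴ * (Uᴴ * Z * U) * (Uᴴ * A) = Aᴴ * Z * A := by
  simp only [conjTranspose_mul, conjTranspose_conjTranspose, Matrix.mul_assoc]
  rw [show U * (Uᴴ * A) = A from by rw [← Matrix.mul_assoc, h],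
    proj_absorb A U h (Z * A)]

lemma conj_comb_sq {t : ℕ} (W : Matrix (Fin p) (Fin t) ℂ) (V : Matrix (Fin t) (Fin n) ℂ) :
    (W * V)ᴴ * (W * V) = Vᴴ * (Wᴴ * W) * V := by
  simp only [conjTranspose_mul, Matrix.mul_assoc]

lemma conj_comb_val {t : ℕ} (W : Matrix (Fin p) (Fin t) ℂ) (V : Matrix (Fin t) (Fin n) ℂ)
    (Z : Matrix (Fin p) (Fin p) ℂ) :
    (W * V)ᴴ * Z * (W * V) = Vᴴ * (Wᴴ * Z * W) * V := by
  simp only [conjTranspose_mul, Matrix.mul_assoc]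
end MulAux

section Conv
variable {g ℓ : ℕ} (K : Fin ℓ → ∀ n : ℕ, Set (Fin g → Matrix (Fin n) (Fin n) ℂ))

lemma goodSet_subset (m : ℕ) : (⋃ k, K k m) ⊆ goodSet K m := by
  intro Y hY
  obtain ⟨_, ⟨k, rfl⟩, hk⟩ := hY
  refine ⟨1, fun _ => m, fun _ => Y, fun _ => 1, fun _ => le_rfl, fun _ => ⟨k, hk⟩, ?_, ?_⟩
  · simp
  · funext j; simp

lemma goodSet_isMatrixConvex (hcvx : ∀ k, IsMatrixConvex g (K k)) :
    IsMatrixConvex g (goodSet K) := by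
  classical
  intro n m sz Xc V hXc hV
  simp only [goodSet, Set.mem_setOf_eq] at hXc
  choose m' sz' Y Wm hle hmem hsum hval using hXc
  set ι := (i : Fin m) × Fin (m' i) with hι
  let A : ∀ u : ι, Matrix (Fin (sz' u.1 u.2)) (Fin n) ℂ := fun u => Wm u.1 u.2 * V u.1
  have hcomp : ∀ u : ι, ∃ (q : ℕ) (_ : q ≤ n) (U : Matrix (Fin (sz' u.1 u.2)) (Fin q) ℂ),
      Uᴴ * U = 1 ∧ U * Uᴴ * A u = A u := fun u => exists_compression _ n (A u)
  choose q hq U hUU hfix using hcomp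
  refine mem_goodSet_of_fintype K n _ ι q
    (fun u => fun j => (U u)ᴴ * Y u.1 u.2 j * U u)
    (fun u => (U u)ᴴ * A u) hq ?_ ?_ ?_
  · intro u
    obtain ⟨k, hk⟩ := hmem u.1 u.2
    refine ⟨k, ?_⟩
    have h := hcvx k (q u) 1 (fun _ => sz' u.1 u.2) (fun _ => Y u.1 u.2) (fun _ => U u)
      (fun _ => hk) (by simpa using hUU u)
    simpa using h
  · rw [Finset.sum_congr rfl (fun u _ => compress_sq (A u) (U u) (hfix u))]
    rw [← Finset.univ_sigma_univ, Finset.sum_sigma]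
    have hi : ∀ i : Fin m, ∑ t : Fin (m' i), (A ⟨i, t⟩)ᴴ * A ⟨i, t⟩ = (V i)ᴴ * V i := by
      intro i
      rw [Finset.sum_congr rfl (fun t _ => conj_comb_sq (Wm i t) (V i)),
        ← Matrix.sum_mul, ← Matrix.mul_sum, hsum i, Matrix.mul_one]
    rw [Finset.sum_congr rfl (fun i _ => hi i), hV]
  · funext j
    rw [Finset.sum_congr rfl
      (fun u _ => compress_val (A u) (U u) (hfix u) (Y u.1 u.2 j))]
    rw [← Finset.univ_sigma_univ, Finset.sum_sigma]
    have hi : ∀ i : Fin m, ∑ t : Fin (m' i), (A ⟨i, t⟩)ᴴ * Y i t j * A ⟨i, t⟩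
        = (V i)ᴴ * Xc i j * V i := by
      intro i
      rw [Finset.sum_congr rfl (fun t _ => conj_comb_val (Wm i t) (V i) (Y i t j)),
        ← Matrix.sum_mul, ← Matrix.mul_sum,
        show (∑ t : Fin (m' i), (Wm i t)ᴴ * Y i t j * Wm i t) = Xc i j from
          (congrFun (hval i) j).symm]
    rw [Finset.sum_congr rfl (fun i _ => hi i)]
end Conv

/-- Every element at level `n` of the matrix convex hull of a finite union of levelwise
closed and bounded matrix convex sets is a matrix convex combination of elements of the
union, taken at levels at most `n`. -/
theorem mconv_union_combination_small_level (g ℓ : ℕ)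
    (K : Fin ℓ → ∀ n : ℕ, Set (Fin g → Matrix (Fin n) (Fin n) ℂ))
    (hcvx : ∀ k, IsMatrixConvex g (K k))
    (hclosed : ∀ k n, IsClosed (K k n))
    (hbdd : ∀ k n, ∃ C : ℝ, ∀ X ∈ K k n, ∀ j a b, ‖X j a b‖ ≤ C)
    (n : ℕ) (X : Fin g → Matrix (Fin n) (Fin n) ℂ)
    (hX : X ∈ matrixConvexHull g (fun m => ⋃ k, K k m) n) :
    ∃ (m : ℕ) (sz : Fin m → ℕ)
      (X' : ∀ i : Fin m, Fin g → Matrix (Fin (sz i)) (Fin (sz i)) ℂ)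
      (V : ∀ i : Fin m, Matrix (Fin (sz i)) (Fin n) ℂ),
      (∀ i, sz i ≤ n) ∧ (∀ i, ∃ k, X' i ∈ K k (sz i)) ∧
      (∑ i, (V i)ᴴ * V i = 1) ∧
      X = fun j => ∑ i, (V i)ᴴ * X' i j * V i := by
  exact hX (goodSet K) (goodSet_isMatrixConvex K hcvx) (fun m => goodSet_subset K m)
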